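/- Fix reals τ > 0, X_A, X₁ with τ/2 ≤ X_A < X₁ and X₁ ≥ τ. Define h(α) = (X₁ + √(X₁² − τ²))·(1 − α)²/(X_A − αX₁) + 2α on the interval where X_A − αX₁ > 0. Then h is strictly increasing in α on [0, X_A/X₁). -/

import Mathlib

theorem stmt_7 (τ XA X₁ : ℝ) (hτ : 0 < τ) (h1 : τ / 2 ≤ XA) (h2 : XA < X₁) (h3 : τ ≤ X₁)
    (h : ℝ → ℝ)
    (hh : ∀ α, h α = (X₁ + Real.sqrt (X₁ ^ 2 - τ ^ 2)) * (1 - α) ^ 2 / (XA - α * X₁) + 2 * α) :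
    StrictMonoOn h (Set.Ico 0 (XA / X₁)) := by
  set s := Real.sqrt (X₁ ^ 2 - τ ^ 2) with hs
  have hX1 : 0 < X₁ := lt_of_lt_of_le hτ h3
  have hs0 : 0 ≤ s := Real.sqrt_nonneg _
  have hs2 : s ^ 2 = X₁ ^ 2 - τ ^ 2 := Real.sq_sqrt (by nlinarith)
  have hsX : s < X₁ := by nlinarith
  intro a ha b hb hab
  obtain ⟨ha0, ha1⟩ := ha
  obtain ⟨hb0, hb1⟩ := hb
  have hda : 0 < XA - a * X₁ := by
    have := (lt_div_iff₀ hX1).mp ha1; linarith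
  have hdb : 0 < XA - b * X₁ := by
    have := (lt_div_iff₀ hX1).mp hb1; linarith
  rw [hh, hh, ← sub_pos]
  have key : (X₁ + s) * (1 - b) ^ 2 / (XA - b * X₁) + 2 * b -
      ((X₁ + s) * (1 - a) ^ 2 / (XA - a * X₁) + 2 * a) =
      (b - a) * (((X₁ - s) * ((XA - a * X₁) * (XA - b * X₁)) + (X₁ + s) * (X₁ - XA) ^ 2) / X₁) /
        ((XA - a * X₁) * (XA - b * X₁)) := by
    rw [div_add' _ _ _ hdb.ne', div_add' _ _ _ hda.ne', div_sub_div _ _ hdb.ne' hda.ne',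
      div_eq_div_iff (mul_ne_zero hdb.ne' hda.ne') (mul_ne_zero hda.ne' hdb.ne')]
    field_simp
    ring
  rw [key]
  have hnum : 0 < (X₁ - s) * ((XA - a * X₁) * (XA - b * X₁)) + (X₁ + s) * (X₁ - XA) ^ 2 := by
    have h4 : 0 < (X₁ - s) := by linarith
    have h6 : 0 < X₁ - XA := by linarith
    have h5 : 0 < (X₁ + s) * (X₁ - XA) ^ 2 := mul_pos (by linarith) (pow_pos h6 2)
    nlinarith [mul_pos hda hdb]
  have hba : 0 < b - a := by linarith
  exact div_pos (mul_pos hba (div_pos hnum hX1)) (mul_pos hda hdb)
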